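/- For every m-linear form T : (ℝⁿ)^m → ℝ (with the sup norm on each factor), one has (∑_{i₁,…,i_m=1}^{n} |T(e_{i₁},…,e_{i_m})|²)^{1/2} ≤ ‖T‖. -/

import Mathlib

/-- Standard basis vector of `ℓ∞ⁿ`. -/
noncomputable def stdBasis (n : ℕ) (i : Fin n) : PiLp ⊤ (fun _ : Fin n => ℝ) :=
  (WithLp.equiv ⊤ (∀ _ : Fin n, ℝ)).symm (Pi.single i 1)

noncomputable def sgn (b : Bool) : ℝ := if b then 1 else -1

lemma sgn_mul_self (b : Bool) : sgn b * sgn b = 1 := by cases b <;> simp [sgn]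

lemma abs_sgn (b : Bool) : |sgn b| ≤ 1 := by cases b <;> simp [sgn]

lemma sum_sgn : ∑ b : Bool, sgn b = 0 := by simp [sgn]

lemma expand_vec (n : ℕ) (c : Fin n → ℝ) :
    (WithLp.equiv ⊤ (∀ _ : Fin n, ℝ)).symm c = ∑ i, c i • stdBasis n i := by
  have key : ∀ v : Fin n → ℝ,
      (WithLp.equiv ⊤ (∀ _ : Fin n, ℝ)).symm v
        = (WithLp.linearEquiv ⊤ ℝ (∀ _ : Fin n, ℝ)).symm v := fun _ => rfl
  simp only [stdBasis, key, ← map_smul, ← map_sum]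
  congr 1
  funext i
  simp [Pi.single_apply, Finset.sum_apply]

lemma prod_as_pairs (m n : ℕ) (j : Fin m → Fin n) (s : Fin m × Fin n → Bool) :
    ∏ k : Fin m, sgn (s (k, j k))
      = ∏ p : Fin m × Fin n, (if p.2 = j p.1 then sgn (s p) else 1) := by
  rw [Fintype.prod_prod_type]
  refine Finset.prod_congr rfl fun k _ => ?_
  rw [Finset.prod_ite_eq' Finset.univ (j k) (fun i => sgn (s (k, i)))]
  simp

lemma orth (m n : ℕ) (j j' : Fin m → Fin n) :
    ∑ s : Fin m × Fin n → Bool,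
      (∏ k, sgn (s (k, j k))) * (∏ k, sgn (s (k, j' k)))
      = if j = j' then (2 : ℝ) ^ (m * n) else 0 := by
  have hrw : ∀ s : Fin m × Fin n → Bool,
      (∏ k, sgn (s (k, j k))) * (∏ k, sgn (s (k, j' k)))
        = ∏ p : Fin m × Fin n,
            ((if p.2 = j p.1 then sgn (s p) else 1)
              * (if p.2 = j' p.1 then sgn (s p) else 1)) := by
    intro s
    rw [prod_as_pairs, prod_as_pairs, ← Finset.prod_mul_distrib]
  simp only [hrw]
  rw [← Fintype.piFinset_univ, ← Finset.prod_univ_sum (fun _ : Fin m × Fin n => (Finset.univ : Finset Bool))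
    (fun p y => (if p.2 = j p.1 then sgn y else 1) * (if p.2 = j' p.1 then sgn y else 1))]
  by_cases h : j = j'
  · subst h
    simp only [if_pos rfl]
    have : ∀ p : Fin m × Fin n,
        ∑ x : Bool, ((if p.2 = j p.1 then sgn x else 1)
          * (if p.2 = j p.1 then sgn x else 1)) = 2 := by
      intro p
      by_cases hp : p.2 = j p.1 <;> simp [hp, sgn_mul_self]
    rw [Finset.prod_congr rfl fun p _ => this p]
    simp [Fintype.card_prod]
  · rw [if_neg h]
    obtain ⟨k, hk⟩ : ∃ k, j k ≠ j' k := by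
      by_contra hc
      push_neg at hc
      exact h (funext hc)
    refine Finset.prod_eq_zero (Finset.mem_univ (k, j k)) ?_
    simp [hk, sgn]

/-- For every `m`-linear form `T : (ℝⁿ)^m → ℝ` (sup norms),
`(∑_{i₁,…,i_m} |T(e_{i₁},…,e_{i_m})|²)^{1/2} ≤ ‖T‖`. -/
theorem stmt3 (m n : ℕ)
    (T : ContinuousMultilinearMap ℝ (fun _ : Fin m => PiLp ⊤ fun _ : Fin n => ℝ) ℝ) :
    (∑ j : Fin m → Fin n, |T (fun k => stdBasis n (j k))| ^ 2) ^ ((1 : ℝ) / 2)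
      ≤ ‖T‖ := by
  set a : (Fin m → Fin n) → ℝ := fun j => T (fun k => stdBasis n (j k)) with ha
  set F : ((Fin m × Fin n) → Bool) → ℝ := fun s =>
    T (fun k => (WithLp.equiv ⊤ (∀ _ : Fin n, ℝ)).symm (fun i => sgn (s (k, i)))) with hF
  -- Step A: expansion
  have stepA : ∀ s, F s = ∑ j : Fin m → Fin n, (∏ k, sgn (s (k, j k))) * a j := by
    intro s
    have h1 : ∀ k : Fin m,
        (WithLp.equiv ⊤ (∀ _ : Fin n, ℝ)).symm (fun i => sgn (s (k, i)))
          = ∑ i, sgn (s (k, i)) • stdBasis n i := fun k => expand_vec n _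
    calc F s = T (fun k => ∑ i, sgn (s (k, i)) • stdBasis n i) := by
            simp only [hF]; congr 1; funext k; exact h1 k
      _ = ∑ j : Fin m → Fin n, T (fun k => sgn (s (k, j k)) • stdBasis n (j k)) := by
            rw [T.map_sum]
      _ = ∑ j : Fin m → Fin n, (∏ k, sgn (s (k, j k))) * a j := by
            refine Finset.sum_congr rfl fun j _ => ?_
            rw [T.map_smul_univ]
            simp [ha, smul_eq_mul]
  -- Step B: orthogonality
  have stepB : ∑ s : (Fin m × Fin n) → Bool, F s ^ 2
      = (2 : ℝ) ^ (m * n) * ∑ j, a j ^ 2 := by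
    have : ∀ s : (Fin m × Fin n) → Bool, F s ^ 2
        = ∑ j : Fin m → Fin n, ∑ j' : Fin m → Fin n,
            ((∏ k, sgn (s (k, j k))) * (∏ k, sgn (s (k, j' k)))) * (a j * a j') := by
      intro s
      rw [stepA s, sq, Finset.sum_mul_sum]
      refine Finset.sum_congr rfl fun j _ => Finset.sum_congr rfl fun j' _ => by ring
    simp only [this]
    rw [Finset.sum_comm]
    have swap2 : ∀ j, ∑ s : (Fin m × Fin n) → Bool, ∑ j' : Fin m → Fin n,
            ((∏ k, sgn (s (k, j k))) * (∏ k, sgn (s (k, j' k)))) * (a j * a j')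
        = (2 : ℝ) ^ (m * n) * a j ^ 2 := by
      intro j
      rw [Finset.sum_comm]
      have : ∀ j', ∑ s : (Fin m × Fin n) → Bool,
          ((∏ k, sgn (s (k, j k))) * (∏ k, sgn (s (k, j' k)))) * (a j * a j')
          = (if j = j' then (2:ℝ) ^ (m*n) else 0) * (a j * a j') := by
        intro j'
        rw [← Finset.sum_mul, orth]
      simp only [this, ite_mul, zero_mul]
      rw [Finset.sum_ite_eq Finset.univ j (fun j' => (2:ℝ)^(m*n) * (a j * a j'))]
      simp only [Finset.mem_univ, if_true]
      ring
    rw [Finset.sum_congr rfl fun j _ => swap2 j, ← Finset.mul_sum]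
  -- Step C: each |F s| ≤ ‖T‖
  have stepC : ∀ s, |F s| ≤ ‖T‖ := by
    intro s
    have hb : ∀ k : Fin m,
        ‖(WithLp.equiv ⊤ (∀ _ : Fin n, ℝ)).symm (fun i => sgn (s (k, i)))‖ ≤ 1 := by
      intro k
      rw [WithLp.equiv_symm_apply, PiLp.norm_toLp]
      refine (pi_norm_le_iff_of_nonneg zero_le_one).2 fun i => ?_
      simpa [Real.norm_eq_abs] using abs_sgn (s (k, i))
    calc |F s| ≤ ‖T‖ * ∏ k : Fin m, ‖(WithLp.equiv ⊤ (∀ _ : Fin n, ℝ)).symm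
            (fun i => sgn (s (k, i)))‖ := T.le_opNorm _
      _ ≤ ‖T‖ * 1 := by
          refine mul_le_mul_of_nonneg_left ?_ (norm_nonneg T)
          exact Finset.prod_le_one (fun k _ => norm_nonneg _) (fun k _ => hb k)
      _ = ‖T‖ := mul_one _
  -- Combine
  have hsum : ∑ j, a j ^ 2 ≤ ‖T‖ ^ 2 := by
    have h1 : ∑ s : (Fin m × Fin n) → Bool, F s ^ 2
        ≤ ∑ s : (Fin m × Fin n) → Bool, ‖T‖ ^ 2 := by
      refine Finset.sum_le_sum fun s _ => ?_
      have := stepC s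
      calc F s ^ 2 = |F s| ^ 2 := (sq_abs _).symm
        _ ≤ ‖T‖ ^ 2 := pow_le_pow_left₀ (abs_nonneg _) this 2
    rw [stepB] at h1
    have hcard : (Finset.univ : Finset ((Fin m × Fin n) → Bool)).card = 2 ^ (m * n) := by
      simp [Fintype.card_fun, Fintype.card_prod]
    rw [Finset.sum_const, hcard, nsmul_eq_mul] at h1
    push_cast at h1
    have h2 : (0:ℝ) < 2 ^ (m * n) := by positivity
    exact le_of_mul_le_mul_left h1 h2
  have habs : ∑ j : Fin m → Fin n, |a j| ^ 2 = ∑ j, a j ^ 2 := by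
    exact Finset.sum_congr rfl fun j _ => sq_abs _
  rw [← Real.sqrt_eq_rpow, habs]
  calc Real.sqrt (∑ j, a j ^ 2) ≤ Real.sqrt (‖T‖ ^ 2) := Real.sqrt_le_sqrt hsum
    _ = ‖T‖ := Real.sqrt_sq (norm_nonneg T)
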